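/- For every even integer n ≥ 8, the graph A_n is a 2-connected simple graph of order n with exactly 3n/2 edges in which every edge lies in a triangle. -/

import Mathlib

/-- Number of edges of a simple graph. -/
noncomputable def numEdges {V : Type*} (G : SimpleGraph V) : ℕ := Nat.card G.edgeSet

/-- Every edge of `G` lies in a triangle. -/
def EveryEdgeInTriangle {V : Type*} (G : SimpleGraph V) : Prop :=
  ∀ ⦃u v : V⦄, G.Adj u v → ∃ w, G.Adj u w ∧ G.Adj v w

/-- `G` is 2-connected: it has at least 3 vertices and deleting any single vertex
leaves a connected graph. -/
def TwoConnected {V : Type*} (G : SimpleGraph V) : Prop :=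
  3 ≤ Nat.card V ∧ ∀ v : V, (G.induce ({v}ᶜ : Set V)).Connected

/-- `G` is 3-connected: it has at least 4 vertices and deleting any set of at most 2
vertices leaves a connected graph. -/
def ThreeConnected {V : Type*} (G : SimpleGraph V) : Prop :=
  4 ≤ Nat.card V ∧ ∀ S : Set V, S.ncard ≤ 2 → (G.induce (Sᶜ : Set V)).Connected

/-- `G` is edge-pancyclic: every edge lies in a cycle of each length `k` with `3 ≤ k ≤ |V|`. -/
def EdgePancyclic {V : Type*} (G : SimpleGraph V) : Prop :=
  ∀ k : ℕ, 3 ≤ k → k ≤ Nat.card V → ∀ ⦃u v : V⦄, G.Adj u v →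
    ∃ c : G.Walk u u, c.IsCycle ∧ c.length = k ∧ s(u, v) ∈ c.edges

/-- Base relation for the graph `A_n` (`n = 2q`): vertices `inl i` are the cycle
vertices `vᵢ`, vertices `inr i` are the added vertices `uᵢ`; `vᵢ ~ vᵢ₊₁`,
`uᵢ ~ vᵢ` and `uᵢ ~ vᵢ₊₁`. -/
def ARel (q : ℕ) : (ZMod q ⊕ ZMod q) → (ZMod q ⊕ ZMod q) → Prop :=
  fun x y => match x, y with
    | Sum.inl a, Sum.inl b => a = b + 1
    | Sum.inr a, Sum.inl b => b = a ∨ b = a + 1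
    | _, _ => False

/-- The graph `A_n` where `n = 2q`. -/
def graphA (q : ℕ) : SimpleGraph (ZMod q ⊕ ZMod q) := SimpleGraph.fromRel (ARel q)

/-- The graph `F_n` where `n = 2q + 1`: `A_{n-1}` plus a new vertex (`none`)
adjacent to `v₁` and `v₂`. -/
def graphF (q : ℕ) : SimpleGraph (Option (ZMod q ⊕ ZMod q)) :=
  SimpleGraph.fromRel (fun x y => match x, y with
    | some a, some b => ARel q a b
    | none, some w => w = Sum.inl 1 ∨ w = Sum.inl 2
    | _, _ => False)

/-- The graph `G_n` where `n = 2q + 1`: `A_{n-1}` plus a new vertex (`none`)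
adjacent to `u₁` and `v₁`. -/
def graphG (q : ℕ) : SimpleGraph (Option (ZMod q ⊕ ZMod q)) :=
  SimpleGraph.fromRel (fun x y => match x, y with
    | some a, some b => ARel q a b
    | none, some w => w = Sum.inr 1 ∨ w = Sum.inl 1
    | _, _ => False)

/-- The graph `H_n` where `n = 2q + 1`: `A_{n-1}` with the edge `v₁v₂` subdivided by a
new vertex (`none`), which is moreover joined to `u₁`. -/
def graphH (q : ℕ) : SimpleGraph (Option (ZMod q ⊕ ZMod q)) :=
  SimpleGraph.fromRel (fun x y => match x, y with
    | some (Sum.inl a), some (Sum.inl b) =>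
        a = b + 1 ∧ ¬(a = 2 ∧ b = 1) ∧ ¬(a = 1 ∧ b = 2)
    | some a, some b => ARel q a b
    | none, some w => w = Sum.inl 1 ∨ w = Sum.inl 2 ∨ w = Sum.inr 1
    | _, _ => False)

/-- The wheel graph of order `n`: the hub `none` joined to every vertex of the
cycle `C_{n-1}` on `ZMod (n-1)`. -/
def wheelGraph (n : ℕ) : SimpleGraph (Option (ZMod (n - 1))) :=
  SimpleGraph.fromRel (fun x y => match x, y with
    | some a, some b => a = b + 1
    | none, some _ => True
    | _, _ => False)

section
variable {q : ℕ}

lemma AOneNeZero (hq : 2 ≤ q) : (1 : ZMod q) ≠ 0 := by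
  haveI : NeZero q := ⟨by omega⟩
  intro h
  have h2 := (ZMod.natCast_eq_zero_iff 1 q).mp (by simpa using h)
  have := Nat.le_of_dvd one_pos h2
  omega

lemma inl_succ_ne (hq : 2 ≤ q) (a : ZMod q) :
    (Sum.inl a : ZMod q ⊕ ZMod q) ≠ Sum.inl (a + 1) := by
  simp only [ne_eq, Sum.inl.injEq]
  intro h
  exact AOneNeZero hq (add_left_cancel ((by rw [add_zero]; exact h.symm) : a + 1 = a + 0))

lemma adjA_cycle (hq : 2 ≤ q) (a : ZMod q) :
    (graphA q).Adj (Sum.inl a) (Sum.inl (a+1)) :=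
  ⟨inl_succ_ne hq a, Or.inr rfl⟩

lemma adjA_spoke1 (a : ZMod q) : (graphA q).Adj (Sum.inr a) (Sum.inl a) :=
  ⟨by simp, Or.inl (Or.inl rfl)⟩

lemma adjA_spoke2 (a : ZMod q) : (graphA q).Adj (Sum.inr a) (Sum.inl (a+1)) :=
  ⟨by simp, Or.inl (Or.inr rfl)⟩

lemma everyEdge (hq : 2 ≤ q) : ∀ ⦃u v : ZMod q ⊕ ZMod q⦄, (graphA q).Adj u v →
    ∃ w, (graphA q).Adj u w ∧ (graphA q).Adj v w := by
  rintro (a | a) (b | b) ⟨hne, h | h⟩ <;> simp only [ARel] at h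
  · subst h; exact ⟨Sum.inr b, (adjA_spoke2 b).symm, (adjA_spoke1 b).symm⟩
  · subst h; exact ⟨Sum.inr a, (adjA_spoke1 a).symm, (adjA_spoke2 a).symm⟩
  · rcases h with h | h
    · subst h; exact ⟨Sum.inl (a + 1), adjA_cycle hq a, adjA_spoke2 a⟩
    · subst h; exact ⟨Sum.inl b, (adjA_cycle hq b).symm, adjA_spoke1 b⟩
  · rcases h with h | h
    · subst h; exact ⟨Sum.inl (b + 1), adjA_spoke2 b, adjA_cycle hq b⟩
    · subst h; exact ⟨Sum.inl a, adjA_spoke1 a, (adjA_cycle hq a).symm⟩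

end

section
variable {q : ℕ}

lemma cast_ne_zero' (hq0 : 0 < q) {m : ℕ} (h1 : 0 < m) (h2 : m < q) : (m : ZMod q) ≠ 0 := by
  haveI : NeZero q := ⟨by omega⟩
  intro h
  have := (ZMod.natCast_eq_zero_iff m q).mp h
  have := Nat.le_of_dvd h1 this
  omega

lemma induce_adj_of {V : Type*} {G : SimpleGraph V} {S : Set V} {x y : V}
    (hx : x ∈ S) (hy : y ∈ S) (h : G.Adj x y) : (G.induce S).Adj ⟨x, hx⟩ ⟨y, hy⟩ := h

lemma cast_val_eq' (hq0 : 0 < q) (x : ZMod q) : ((x.val : ℕ) : ZMod q) = x := by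
  haveI : NeZero q := ⟨by omega⟩
  exact ZMod.natCast_rightInverse x

lemma connA (hq : 2 ≤ q) (v : ZMod q ⊕ ZMod q) :
    ((graphA q).induce ({v}ᶜ : Set (ZMod q ⊕ ZMod q))).Connected := by
  haveI : NeZero q := ⟨by omega⟩
  rcases v with c | c
  · -- deleting cycle vertex inl c
    set S : Set (ZMod q ⊕ ZMod q) := ({Sum.inl c}ᶜ : Set _) with hS
    have hmem : ∀ k : ℕ, 0 < k → k < q → Sum.inl (c + (k : ZMod q)) ∈ S := by
      intro k h1 h2
      simp only [hS, Set.mem_compl_iff, Set.mem_singleton_iff, Sum.inl.injEq]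
      intro h
      exact cast_ne_zero' (by omega) h1 h2 (by linear_combination h)
    have hroot : Sum.inl (c + 1) ∈ S := by simpa using hmem 1 one_pos (by omega)
    set root : S := ⟨Sum.inl (c + 1), hroot⟩ with hrootdef
    haveI : Nonempty S := ⟨root⟩
    have key : ∀ k : ℕ, 0 < k → k < q → ∀ (h : Sum.inl (c + (k : ZMod q)) ∈ S),
        ((graphA q).induce S).Reachable root ⟨Sum.inl (c + (k : ZMod q)), h⟩ := by
      intro k
      induction k with
      | zero => omega
      | succ m ih =>
        intro h1 h2 h
        rcases Nat.eq_zero_or_pos m with rfl | hm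
        · have heq : (⟨Sum.inl (c + ((0 + 1 : ℕ) : ZMod q)), h⟩ : S) = root :=
            Subtype.ext (by norm_num [hrootdef])
          rw [heq]
        · have hm2 : m < q := by omega
          have hmmem := hmem m hm hm2
          have step : ((graphA q).induce S).Adj ⟨Sum.inl (c + (m : ZMod q)), hmmem⟩
              ⟨Sum.inl (c + ((m + 1 : ℕ) : ZMod q)), h⟩ := by
            apply induce_adj_of
            have : c + ((m + 1 : ℕ) : ZMod q) = (c + (m : ZMod q)) + 1 := by push_cast; ring
            rw [this]
            exact adjA_cycle hq _
          exact (ih hm hm2 hmmem).trans step.reachable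
    have hall_inl : ∀ (b : ZMod q) (hb : Sum.inl b ∈ S),
        ((graphA q).induce S).Reachable root ⟨Sum.inl b, hb⟩ := by
      intro b hb
      have hbc : b ≠ c := by simpa [hS, Set.mem_compl_iff] using hb
      set k : ℕ := (b - (c + 1)).val with hk
      have hkq : k < q := ZMod.val_lt _
      have hcast : ((k : ℕ) : ZMod q) = b - (c + 1) := cast_val_eq' (by omega) _
      have hb' : c + 1 + ((k : ℕ) : ZMod q) = b := by rw [hcast]; ring
      rcases Nat.eq_zero_or_pos k with h0 | hpos
      · have heq : (⟨Sum.inl b, hb⟩ : S) = root := by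
          apply Subtype.ext
          show Sum.inl b = Sum.inl (c + 1)
          rw [← hb', h0]; norm_num
        rw [heq]
      · have hkne : k ≠ q - 1 := by
          intro h
          apply hbc
          have h1 : ((k : ℕ) : ZMod q) = -1 := by
            rw [h]
            have : ((q - 1 : ℕ) : ZMod q) = (q : ZMod q) - 1 := by
              push_cast [Nat.cast_sub (by omega : 1 ≤ q)]; ring
            rw [this, ZMod.natCast_self]; ring
          rw [h1] at hcast
          linear_combination -hcast
        have hmem' : Sum.inl (c + ((k + 1 : ℕ) : ZMod q)) ∈ S := hmem (k+1) (by omega) (by omega)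
        have hreach := key (k + 1) (by omega) (by omega) hmem'
        have heq : (⟨Sum.inl (c + ((k + 1 : ℕ) : ZMod q)), hmem'⟩ : S) = ⟨Sum.inl b, hb⟩ := by
          apply Subtype.ext
          show Sum.inl (c + ((k + 1 : ℕ) : ZMod q)) = Sum.inl b
          congr 1
          push_cast
          push_cast at hb'
          linear_combination hb'
        exact heq ▸ hreach
    have hall : ∀ u : S, ((graphA q).induce S).Reachable root u := by
      rintro ⟨(b | b), hb⟩
      · exact hall_inl b hb
      · by_cases hbc : b = c
        · subst hbc
          have h2 : Sum.inl (b + 1) ∈ S := by simpa using hmem 1 one_pos (by omega)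
          have step : ((graphA q).induce S).Adj ⟨Sum.inl (b+1), h2⟩ ⟨Sum.inr b, hb⟩ :=
            induce_adj_of _ _ (adjA_spoke2 b).symm
          exact (hall_inl _ h2).trans step.reachable
        · have h2 : Sum.inl b ∈ S := by simp [hS, hbc]
          have step : ((graphA q).induce S).Adj ⟨Sum.inl b, h2⟩ ⟨Sum.inr b, hb⟩ :=
            induce_adj_of _ _ (adjA_spoke1 b).symm
          exact (hall_inl b h2).trans step.reachable
    exact ⟨fun u w => (hall u).symm.trans (hall w)⟩
  · -- deleting a pendant vertex inr c
    set S : Set (ZMod q ⊕ ZMod q) := ({Sum.inr c}ᶜ : Set _) with hS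
    have hmeml : ∀ b : ZMod q, Sum.inl b ∈ S := by intro b; simp [hS]
    set root : S := ⟨Sum.inl 0, hmeml 0⟩ with hrootdef
    haveI : Nonempty S := ⟨root⟩
    have key : ∀ k : ℕ, ((graphA q).induce S).Reachable root ⟨Sum.inl (k : ZMod q), hmeml _⟩ := by
      intro k
      induction k with
      | zero =>
        have heq : (⟨Sum.inl ((0 : ℕ) : ZMod q), hmeml _⟩ : S) = root :=
          Subtype.ext (by norm_num [hrootdef])
        rw [heq]
      | succ m ih =>
        have step : ((graphA q).induce S).Adj ⟨Sum.inl (m : ZMod q), hmeml _⟩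
            ⟨Sum.inl ((m + 1 : ℕ) : ZMod q), hmeml _⟩ := by
          apply induce_adj_of
          have : ((m + 1 : ℕ) : ZMod q) = (m : ZMod q) + 1 := by push_cast; ring
          rw [this]
          exact adjA_cycle hq _
        exact ih.trans step.reachable
    have hall_inl : ∀ b : ZMod q, ((graphA q).induce S).Reachable root ⟨Sum.inl b, hmeml b⟩ := by
      intro b
      have := key b.val
      have heq : (⟨Sum.inl ((b.val : ℕ) : ZMod q), hmeml _⟩ : S) = ⟨Sum.inl b, hmeml b⟩ :=
        Subtype.ext (by rw [cast_val_eq' (by omega) b])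
      exact heq ▸ this
    have hall : ∀ u : S, ((graphA q).induce S).Reachable root u := by
      rintro ⟨(b | b), hb⟩
      · exact hall_inl b
      · have step : ((graphA q).induce S).Adj ⟨Sum.inl b, hmeml b⟩ ⟨Sum.inr b, hb⟩ :=
          induce_adj_of _ _ (adjA_spoke1 b).symm
        exact (hall_inl b).trans step.reachable
    exact ⟨fun u w => (hall u).symm.trans (hall w)⟩
end

section
variable {q : ℕ}

lemma sub_add_one (b : ZMod q) : b - 1 + 1 = b := by ring

lemma two_ne_zero'' (hq : 4 ≤ q) : (2 : ZMod q) ≠ 0 := by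
  have := cast_ne_zero' (q := q) (by omega) (m := 2) (by omega) (by omega)
  simpa using this

lemma neighbors_inl (hq : 4 ≤ q) [NeZero q] [DecidableRel (graphA q).Adj] (b : ZMod q) :
    (graphA q).neighborFinset (Sum.inl b) =
      {Sum.inl (b+1), Sum.inl (b-1), Sum.inr b, Sum.inr (b-1)} := by
  haveI : NeZero q := ⟨by omega⟩
  ext x
  simp only [SimpleGraph.mem_neighborFinset, Finset.mem_insert, Finset.mem_singleton]
  constructor
  · rintro ⟨hne, h | h⟩ <;> rcases x with c | c <;> simp only [ARel] at h
    · subst h; right; left; congr 1; ring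
    · subst h; left; rfl
    · rcases h with h | h
      · right; right; left; rw [h]
      · right; right; right; rw [h]; congr 1; ring
  · rintro (rfl | rfl | rfl | rfl)
    · exact adjA_cycle (by omega) b
    · exact (sub_add_one b ▸ adjA_cycle (q := q) (by omega) (b - 1)).symm
    · exact (adjA_spoke1 b).symm
    · exact (sub_add_one b ▸ adjA_spoke2 (q := q) (b - 1)).symm

lemma deg_inl (hq : 4 ≤ q) [NeZero q] [DecidableRel (graphA q).Adj] (b : ZMod q) :
    (graphA q).degree (Sum.inl b) = 4 := by
  rw [SimpleGraph.degree, neighbors_inl hq b]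
  have h12 : b + 1 ≠ b - 1 := by
    intro h
    exact two_ne_zero'' hq (by linear_combination h)
  have h34 : (Sum.inr b : ZMod q ⊕ ZMod q) ≠ Sum.inr (b - 1) := by
    simp only [ne_eq, Sum.inr.injEq]
    intro h
    exact AOneNeZero (q := q) (by omega) (by linear_combination h)
  rw [Finset.card_insert_of_notMem (by simp [h12]),
      Finset.card_insert_of_notMem (by simp),
      Finset.card_insert_of_notMem (by simp [h34])]
  rfl

lemma neighbors_inr (hq : 4 ≤ q) [NeZero q] [DecidableRel (graphA q).Adj] (b : ZMod q) :
    (graphA q).neighborFinset (Sum.inr b) = {Sum.inl b, Sum.inl (b+1)} := by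
  haveI : NeZero q := ⟨by omega⟩
  ext x
  simp only [SimpleGraph.mem_neighborFinset, Finset.mem_insert, Finset.mem_singleton]
  constructor
  · rintro ⟨hne, h | h⟩ <;> rcases x with c | c <;> simp only [ARel] at h
    · rcases h with h | h
      · subst h; left; rfl
      · subst h; right; rfl
  · rintro (rfl | rfl)
    · exact adjA_spoke1 b
    · exact adjA_spoke2 b

lemma deg_inr (hq : 4 ≤ q) [NeZero q] [DecidableRel (graphA q).Adj] (b : ZMod q) :
    (graphA q).degree (Sum.inr b) = 2 := by
  rw [SimpleGraph.degree, neighbors_inr hq b]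
  have h : (Sum.inl b : ZMod q ⊕ ZMod q) ≠ Sum.inl (b + 1) := inl_succ_ne (by omega) b
  rw [Finset.card_insert_of_notMem (by simp [h])]
  rfl

lemma edgeCount (hq : 4 ≤ q) : Nat.card (graphA q).edgeSet = 3 * q := by
  haveI : NeZero q := ⟨by omega⟩
  classical
  rw [Nat.card_eq_fintype_card, ← SimpleGraph.edgeFinset_card]
  have hsum := SimpleGraph.sum_degrees_eq_twice_card_edges (graphA q)
  rw [Fintype.sum_sum_type] at hsum
  simp only [deg_inl hq, deg_inr hq, Finset.sum_const, Finset.card_univ, ZMod.card,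
    smul_eq_mul] at hsum
  omega
end

/-- For every even `n ≥ 8`, the graph `A_n` is a 2-connected graph of
order `n` with exactly `3n/2` edges in which every edge lies in a triangle. -/
theorem stmt_15 (n : ℕ) (hn : 8 ≤ n) (heven : Even n) :
    Nat.card (ZMod (n / 2) ⊕ ZMod (n / 2)) = n ∧
    TwoConnected (graphA (n / 2)) ∧
    numEdges (graphA (n / 2)) = 3 * n / 2 ∧
    EveryEdgeInTriangle (graphA (n / 2)) := by
  obtain ⟨m, hm⟩ := heven
  set q : ℕ := n / 2 with hqdef
  have hq : 4 ≤ q := by omega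
  have hnq : n = 2 * q := by omega
  haveI : NeZero q := ⟨by omega⟩
  have hcard : Nat.card (ZMod q ⊕ ZMod q) = n := by
    rw [Nat.card_eq_fintype_card, Fintype.card_sum, ZMod.card]
    omega
  refine ⟨hcard, ⟨by omega, fun v => connA (by omega) v⟩, ?_, everyEdge (by omega)⟩
  show Nat.card (graphA q).edgeSet = 3 * n / 2
  rw [edgeCount hq]
  omega
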